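/- If real numbers θ₁, …, θ_k together with 1 are linearly independent over ℚ, then the set of points ((n·θ₁ mod 1), …, (n·θ_k mod 1)) for n ∈ ℕ is dense in the unit cube [0,1]^k. -/

import Mathlib

open Finset Filter Real Topology

noncomputable def ee (t : ℝ) : ℂ := Complex.exp (2 * Real.pi * t * Complex.I)

lemma ee_add (s t : ℝ) : ee (s + t) = ee s * ee t := by
  rw [ee, ee, ee, ← Complex.exp_add]; push_cast; ring_nf

lemma ee_zero : ee 0 = 1 := by simp [ee]

lemma ee_ne_zero (t : ℝ) : ee t ≠ 0 := Complex.exp_ne_zero _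

lemma ee_abs (t : ℝ) : ‖ee t‖ = 1 := by
  rw [ee, Complex.norm_exp]
  norm_num [Complex.mul_I_re]

lemma ee_zpow (m : ℤ) (t : ℝ) : ee t ^ m = ee (m * t) := by
  rw [ee, ee, ← Complex.exp_int_mul]; push_cast; ring_nf

lemma ee_npow (n : ℕ) (t : ℝ) : ee t ^ n = ee (n * t) := by
  simpa using ee_zpow n t

lemma ee_inv (t : ℝ) : (ee t)⁻¹ = ee (-t) := by
  simpa using ee_zpow (-1) t

lemma ee_eq_one_iff (t : ℝ) : ee t = 1 ↔ ∃ m : ℤ, t = m := by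
  rw [ee, Complex.exp_eq_one_iff]
  constructor
  · rintro ⟨n, hn⟩
    refine ⟨n, ?_⟩
    have h2 : ((t : ℂ) - n) * (2 * (Real.pi : ℂ) * Complex.I) = 0 := by
      linear_combination hn
    rcases mul_eq_zero.mp h2 with h | h
    · have : (t : ℂ) = n := by linear_combination h
      exact_mod_cast this
    · exfalso
      have hπ : (Real.pi : ℂ) ≠ 0 := by exact_mod_cast Real.pi_ne_zero
      simp [hπ, Complex.I_ne_zero] at h
  · rintro ⟨m, rfl⟩
    exact ⟨m, by push_cast; ring⟩

lemma ee_sum {α : Type*} (s : Finset α) (f : α → ℝ) :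
    ee (∑ i ∈ s, f i) = ∏ i ∈ s, ee (f i) := by
  simp only [ee]
  rw [← Complex.exp_sum]
  congr 1
  push_cast
  rw [Finset.mul_sum, Finset.sum_mul]

lemma cos_expand (t : ℝ) :
    (((1 + Real.cos (2*Real.pi*t))/2 : ℝ) : ℂ) = (2 + ee t + ee (-t)) / 4 := by
  have h : ee t + ee (-t) = 2 * Complex.cos (↑(2*Real.pi*t)) := by
    rw [Complex.two_cos, ee, ee]
    push_cast
    ring_nf
  push_cast at h ⊢
  linear_combination -h / 4

lemma pow_expand (p : ℕ) (t : ℝ) :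
    (((1 + Real.cos (2*Real.pi*t))/2 : ℝ) : ℂ) ^ p
      = ∑ j ∈ Finset.range (2*p+1),
          (((2*p).choose j : ℂ) / 4^p) * ee ((((j:ℤ) - (p:ℤ) : ℤ) : ℝ) * t) := by
  set z := ee t with hzdef
  have hz : z ≠ 0 := ee_ne_zero t
  have key : (2 + z + z⁻¹) ^ p * z ^ p = ∑ j ∈ range (2*p+1), ((2*p).choose j : ℂ) * z ^ j := by
    rw [← mul_pow]
    have hb : (2 + z + z⁻¹) * z = (z+1)^2 := by field_simp; ring
    rw [hb, ← pow_mul, mul_comm 2 p, pow_mul, ← pow_mul, mul_comm p 2, add_pow]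
    refine Finset.sum_congr rfl (fun j hj => ?_)
    simp [mul_comm]
  have hrhs : ∀ j : ℕ, ee ((((j:ℤ) - (p:ℤ) : ℤ) : ℝ) * t) = z ^ j * (z ^ p)⁻¹ := by
    intro j
    rw [← ee_zpow ((j:ℤ) - (p:ℤ)) t, ← hzdef, zpow_sub₀ hz, zpow_natCast, zpow_natCast, div_eq_mul_inv]
  have h4 : (4:ℂ)^p ≠ 0 := pow_ne_zero _ (by norm_num)
  have hzp : z ^ p ≠ 0 := pow_ne_zero _ hz
  rw [cos_expand, div_pow, ← ee_inv]
  have hsum : ∑ j ∈ Finset.range (2*p+1),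
      (((2*p).choose j : ℂ) / 4^p) * ee ((((j:ℤ) - (p:ℤ) : ℤ) : ℝ) * t)
      = (∑ j ∈ range (2*p+1), ((2*p).choose j : ℂ) * z ^ j) * (z^p)⁻¹ / 4^p := by
    rw [Finset.sum_mul, Finset.sum_div]
    refine Finset.sum_congr rfl (fun j hj => ?_)
    rw [hrhs]
    ring
  rw [hsum, ← key]
  field_simp
  rw [← hzdef, show (2 + z + 1/z) = (z*(2+z)+1)/z by rw [eq_div_iff hz, add_mul, one_div_mul_cancel hz]; ring]

lemma avg_tendsto_zero {z : ℂ} (hz : ‖z‖ = 1) (h1 : z ≠ 1) :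
    Tendsto (fun N : ℕ => (N:ℂ)⁻¹ * ∑ n ∈ Finset.range N, z ^ n) atTop (𝓝 0) := by
  have hne : ‖z - 1‖ ≠ 0 := by
    simp only [ne_eq, norm_eq_zero, sub_eq_zero]
    exact h1
  have htend : Tendsto (fun N : ℕ => (2 / ‖z-1‖) * (N:ℝ)⁻¹) atTop (𝓝 0) := by
    simpa using tendsto_inv_atTop_nhds_zero_nat.const_mul (2 / ‖z-1‖)
  apply squeeze_zero_norm _ htend
  intro N
  rw [norm_mul, norm_inv, Complex.norm_natCast]
  rw [mul_comm]
  refine mul_le_mul_of_nonneg_right ?_ (by positivity)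
  · rw [geom_sum_eq h1]
    rw [norm_div]
    gcongr
    calc ‖z ^ N - 1‖ ≤ ‖z ^ N‖ + ‖(1:ℂ)‖ :=
          norm_sub_le _ _
      _ ≤ 2 := by rw [norm_pow, hz]; norm_num

lemma not_int_comb {k : ℕ} {θ : Fin k → ℝ}
    (h : LinearIndependent ℚ (Fin.cons 1 θ : Fin (k + 1) → ℝ))
    (m : Fin k → ℤ) (hm : m ≠ 0) (r : ℤ) :
    ∑ i, (m i : ℝ) * θ i ≠ (r : ℝ) := by
  intro hr
  rw [Fintype.linearIndependent_iff] at h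
  have h0 := h (Fin.cons (-r) (fun i => (m i : ℚ))) ?_
  · obtain ⟨i, hi⟩ := Function.ne_iff.mp hm
    have h1 := h0 i.succ
    rw [Fin.cons_succ] at h1
    exact hi (by exact_mod_cast h1)
  · rw [Fin.sum_univ_succ]
    simp only [Fin.cons_succ, Fin.cons_zero, Rat.smul_def]
    push_cast
    rw [mul_one]
    rw [← hr]
    ring

set_option maxHeartbeats 1000000 in
/-- Kronecker's density theorem: if `θ 1, …, θ k` together with `1` are linearly
independent over `ℚ`, then the points `(fract (n θ 1), …, fract (n θ k))`, `n ∈ ℕ`,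
are dense in the unit cube `[0,1]^k`. -/
theorem kronecker_dense {k : ℕ} (θ : Fin k → ℝ)
    (h : LinearIndependent ℚ (Fin.cons 1 θ : Fin (k + 1) → ℝ)) :
    ∀ x : Fin k → ℝ, (∀ i, x i ∈ Set.Icc (0 : ℝ) 1) →
      ∀ ε > 0, ∃ n : ℕ, ∀ i, |Int.fract ((n : ℝ) * θ i) - x i| < ε := by
  intro x hx ε hε
  -- parameters
  set ε₀ : ℝ := min (ε/2) (1/4) with hε₀def
  have hε₀pos : 0 < ε₀ := lt_min (by linarith) (by norm_num)
  have hε₀le : ε₀ ≤ 1/4 := min_le_right _ _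
  have hε₀ε : ε₀ ≤ ε/2 := min_le_left _ _
  set δ : ℝ := ε₀^2 with hδdef
  have hδpos : 0 < δ := by positivity
  have hδlt : δ < 1 := by nlinarith
  -- shifted targets
  set y : Fin k → ℝ := fun i => min (max (x i) ε₀) (1 - ε₀) with hydef
  have hylb : ∀ i, ε₀ ≤ y i := by
    intro i
    exact le_min (le_max_right _ _) (by linarith)
  have hyub : ∀ i, y i ≤ 1 - ε₀ := fun i => min_le_right _ _
  have hyx : ∀ i, |y i - x i| ≤ ε₀ := by
    intro i
    have h0 := (hx i).1
    have h1 := (hx i).2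
    rw [abs_le]
    constructor
    · have : x i - ε₀ ≤ min (max (x i) ε₀) (1 - ε₀) :=
        le_min (le_max_of_le_left (by linarith)) (by linarith)
      simpa [hydef] using by linarith [this]
    · have : min (max (x i) ε₀) (1 - ε₀) ≤ max (x i) ε₀ := min_le_left _ _
      have h2 : max (x i) ε₀ ≤ x i + ε₀ := max_le (by linarith) (by linarith)
      simp only [hydef]
      linarith
  clear_value y δ ε₀
  -- choose p
  obtain ⟨p, hp1, hpineq⟩ : ∃ p : ℕ, 1 ≤ p ∧ ((2*p+1 : ℝ))^k * (1-δ)^p < 1 := by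
    have hr : |1 - δ| < 1 := abs_lt.mpr ⟨by linarith, by linarith⟩
    have h0 := (tendsto_pow_const_mul_const_pow_of_abs_lt_one k hr).const_mul ((3:ℝ)^k)
    rw [mul_zero] at h0
    have h1 : ∀ᶠ p : ℕ in atTop, (3:ℝ)^k * ((p:ℝ)^k * (1-δ)^p) < 1 :=
      h0.eventually (eventually_lt_nhds one_pos)
    obtain ⟨p, hp1, hp2⟩ := (h1.and (eventually_ge_atTop 1)).exists
    refine ⟨p, hp2, lt_of_le_of_lt ?_ hp1⟩
    have hbase : (2*(p:ℝ)+1) ≤ 3*(p:ℝ) := by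
      have : (1:ℝ) ≤ (p:ℝ) := by exact_mod_cast hp2
      linarith
    have hpow : ((2*(p:ℝ)+1))^k ≤ (3*(p:ℝ))^k := by
      apply pow_le_pow_left₀ (by positivity) hbase
    calc ((2*p+1 : ℝ))^k * (1-δ)^p ≤ (3*(p:ℝ))^k * (1-δ)^p := by
          apply mul_le_mul_of_nonneg_right _ (pow_nonneg (by linarith) p)
          · push_cast
            exact hpow
      _ = (3:ℝ)^k * ((p:ℝ)^k * (1-δ)^p) := by rw [mul_pow]; ring
  -- the constant c₀
  set c₀ : ℝ := (((2*p).choose p : ℝ)/4^p)^k with hc₀def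
  have hchoose : (4:ℝ)^p ≤ (2*p+1) * ((2*p).choose p) := by
    have hn : 4^p ≤ (2*p+1) * ((2*p).choose p) := by
      calc 4^p = 2^(2*p) := by rw [pow_mul]; norm_num
        _ = ∑ j ∈ range (2*p+1), (2*p).choose j := (Nat.sum_range_choose (2*p)).symm
        _ ≤ (2*p+1) * ((2*p).choose p) := by
            have := Finset.sum_le_card_nsmul (range (2*p+1)) (fun j => (2*p).choose j)
              ((2*p).choose p) (fun j _ => by
                have h2 : 2*p/2 = p := by omega
                simpa [h2] using Nat.choose_le_middle j (2*p))
            simpa [Finset.card_range, smul_eq_mul] using this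
    exact_mod_cast hn
  have h4pos : (0:ℝ) < 4^p := by positivity
  have hcpos : (0:ℝ) < ((2*p).choose p : ℝ) := by
    have : 0 < (2*p).choose p := Nat.choose_pos (by omega)
    exact_mod_cast this
  have hc₀lb : ((2*(p:ℝ)+1))⁻¹^k ≤ c₀ := by
    apply pow_le_pow_left₀ (by positivity)
    rw [le_div_iff₀ h4pos, inv_mul_le_iff₀ (by positivity)]
    exact hchoose
  have hδc₀ : (1-δ)^p < c₀ := by
    have h2 : ((2*p+1:ℝ))^k * (1-δ)^p < 1 := hpineq
    have h3 : (0:ℝ) < ((2*(p:ℝ)+1))^k := by positivity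
    have h4 : (1-δ)^p < ((2*(p:ℝ)+1))⁻¹^k := by
      have h5 : (1-δ)^p < 1/((2*(p:ℝ)+1)^k) := by
        rw [lt_div_iff₀ h3, mul_comm]
        exact h2
      rw [inv_pow]
      rw [one_div] at h5
      exact h5
    exact lt_of_lt_of_le h4 hc₀lb
  -- control functions
  set q : Fin k → ℕ → ℝ := fun i n => (1 + Real.cos (2*Real.pi*((n:ℝ)*θ i - y i)))/2 with hqdef
  have hq0 : ∀ i n, 0 ≤ q i n := by
    intro i n
    simp only [hqdef]
    nlinarith [Real.neg_one_le_cos (2*Real.pi*((n:ℝ)*θ i - y i))]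
  have hq1 : ∀ i n, q i n ≤ 1 := by
    intro i n
    simp only [hqdef]
    nlinarith [Real.cos_le_one (2*Real.pi*((n:ℝ)*θ i - y i))]
  set P : ℕ → ℝ := fun n => ∏ i, (q i n)^p with hPdef
  set F := Fintype.piFinset (fun _ : Fin k => Finset.range (2*p+1)) with hFdef
  set b : (Fin k → ℕ) → ℝ := fun J => ∏ i, (((2*p).choose (J i) : ℝ)/4^p) with hbdef
  set w : (Fin k → ℕ) → ℂ := fun J => ee (∑ i, (((J i:ℤ) - (p:ℤ) : ℤ):ℝ) * θ i) with hwdef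
  set u : (Fin k → ℕ) → ℂ := fun J => ee (∑ i, (((J i:ℤ) - (p:ℤ) : ℤ):ℝ) * (- y i)) with hudef
  have hPn : ∀ n : ℕ, ((P n : ℝ) : ℂ) = ∑ J ∈ F, ((b J : ℝ):ℂ) * u J * w J ^ n := by
    intro n
    have e1 : ((P n : ℝ) : ℂ) = ∏ i, ((q i n : ℝ) : ℂ) ^ p := by
      simp only [hPdef]
      push_cast
      rfl
    have e2 : ∀ i : Fin k, ((q i n : ℝ) : ℂ)^p
        = ∑ j ∈ Finset.range (2*p+1),
            (((2*p).choose j : ℂ)/4^p) * ee ((((j:ℤ)-(p:ℤ):ℤ):ℝ) * ((n:ℝ)*θ i - y i)) := by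
      intro i
      simp only [hqdef]
      exact pow_expand p ((n:ℝ)*θ i - y i)
    rw [e1]
    rw [Finset.prod_congr rfl (fun i _ => e2 i)]
    rw [Finset.prod_univ_sum]
    refine Finset.sum_congr rfl (fun J hJ => ?_)
    rw [Finset.prod_mul_distrib]
    have hb' : (∏ i, (((2*p).choose (J i) : ℂ)/4^p)) = ((b J : ℝ):ℂ) := by
      simp only [hbdef]
      push_cast
      rfl
    have hsplit : ∀ i : Fin k, (((J i:ℤ)-(p:ℤ):ℤ):ℝ) * ((n:ℝ)*θ i - y i)
        = (n:ℝ) * ((((J i:ℤ)-(p:ℤ):ℤ):ℝ) * θ i) + (((J i:ℤ)-(p:ℤ):ℤ):ℝ) * (- y i) :=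
      fun i => by ring
    have hee : (∏ i, ee ((((J i:ℤ)-(p:ℤ):ℤ):ℝ) * ((n:ℝ)*θ i - y i))) = w J ^ n * u J := by
      rw [← ee_sum]
      rw [Finset.sum_congr rfl (fun i _ => hsplit i)]
      rw [Finset.sum_add_distrib, ← Finset.mul_sum]
      rw [ee_add]
      simp only [hwdef, hudef]
      rw [ee_npow]
    rw [hb', hee]
    ring
  set A : ℕ → ℂ := fun N => (N:ℂ)⁻¹ * ∑ n ∈ range N, ((P n:ℝ):ℂ) with hAdef
  have hA : ∀ N : ℕ, A N = ∑ J ∈ F, ((b J:ℝ):ℂ) * u J * ((N:ℂ)⁻¹ * ∑ n ∈ range N, w J ^ n) := by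
    intro N
    simp only [hAdef]
    simp only [hPn]
    rw [Finset.sum_comm, Finset.mul_sum]
    refine Finset.sum_congr rfl (fun J _ => ?_)
    rw [← Finset.mul_sum]
    ring
  set J₀ : Fin k → ℕ := fun _ => p with hJ₀def
  have hJ₀F : J₀ ∈ F := by
    simp only [hFdef, Fintype.mem_piFinset, hJ₀def, Finset.mem_range]
    omega
  have hwJ₀ : w J₀ = 1 := by
    have : ∀ i : Fin k, (((J₀ i:ℤ) - (p:ℤ) : ℤ):ℝ) * θ i = 0 := by
      intro i; simp [hJ₀def]
    simp only [hwdef]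
    rw [Finset.sum_congr rfl (fun i _ => this i), Finset.sum_const, smul_zero, ee_zero]
  have huJ₀ : u J₀ = 1 := by
    have : ∀ i : Fin k, (((J₀ i:ℤ) - (p:ℤ) : ℤ):ℝ) * (- y i) = 0 := by
      intro i; simp [hJ₀def]
    simp only [hudef]
    rw [Finset.sum_congr rfl (fun i _ => this i), Finset.sum_const, smul_zero, ee_zero]
  have hbJ₀ : b J₀ = c₀ := by
    simp only [hbdef, hJ₀def, hc₀def, Finset.prod_const, Finset.card_univ, Fintype.card_fin]
  have hwne : ∀ J ∈ F, J ≠ J₀ → w J ≠ 1 := by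
    intro J _ hne h1
    simp only [hwdef] at h1
    obtain ⟨r, hr⟩ := (ee_eq_one_iff _).mp h1
    have hm : (fun i => (J i:ℤ) - (p:ℤ)) ≠ 0 := by
      intro h0
      apply hne
      funext i
      have := congrFun h0 i
      simp only [Pi.zero_apply, sub_eq_zero] at this
      exact_mod_cast this
    exact not_int_comb h (fun i => (J i:ℤ) - (p:ℤ)) hm r (by exact_mod_cast hr)
  have hTend : Tendsto A atTop (𝓝 ((b J₀ : ℝ):ℂ)) := by
    have hmain : Tendsto (fun N : ℕ => ∑ J ∈ F, ((b J:ℝ):ℂ) * u J * ((N:ℂ)⁻¹ * ∑ n ∈ range N, w J ^ n))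
        atTop (𝓝 (∑ J ∈ F, if J = J₀ then ((b J₀:ℝ):ℂ) else 0)) := by
      apply tendsto_finset_sum
      intro J hJ
      by_cases hJeq : J = J₀
      · subst hJeq
        simp only [if_pos rfl, hwJ₀, huJ₀, one_pow, ↓reduceIte]
        refine Tendsto.congr' ?_ tendsto_const_nhds
        filter_upwards [eventually_ge_atTop 1] with N hN
        have hN0 : (N:ℂ) ≠ 0 := Nat.cast_ne_zero.mpr (by omega)
        rw [Finset.sum_const, Finset.card_range, nsmul_eq_mul, mul_one]
        field_simp
      · simp only [if_neg hJeq]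
        have habs : ‖w J‖ = 1 := by simp only [hwdef]; exact ee_abs _
        have h0 := avg_tendsto_zero habs (hwne J hJ hJeq)
        have h2 := h0.const_mul (((b J:ℝ):ℂ) * u J)
        rw [mul_zero] at h2
        exact h2
    rw [Finset.sum_ite_eq' F J₀ (fun _ => ((b J₀:ℝ):ℂ)), if_pos hJ₀F] at hmain
    exact hmain.congr (fun N => (hA N).symm)
  have hReTend : Tendsto (fun N : ℕ => (N:ℝ)⁻¹ * ∑ n ∈ range N, P n) atTop (𝓝 (b J₀)) := by
    have h1 := (Complex.continuous_re.tendsto _).comp hTend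
    simp only [Complex.ofReal_re] at h1
    refine Tendsto.congr (fun N => ?_) h1
    have hAN : A N = (((N:ℝ)⁻¹ * ∑ n ∈ range N, P n : ℝ) : ℂ) := by
      simp only [hAdef]
      push_cast
      ring
    simp only [Function.comp_apply, hAN, Complex.ofReal_re]
  have hblt : (1-δ)^p < b J₀ := by rw [hbJ₀]; exact hδc₀
  have hev := hReTend.eventually (eventually_gt_nhds hblt)
  obtain ⟨N, hN1, hNgt⟩ := ((eventually_ge_atTop 1).and hev).exists
  have hNpos : (0:ℝ) < N := by
    have : (0:ℕ) < N := by omega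
    exact_mod_cast this
  obtain ⟨n, _, hPgt⟩ : ∃ n ∈ range N, (1-δ)^p < P n := by
    by_contra hcon
    push_neg at hcon
    have hsum : ∑ n ∈ range N, P n ≤ N * (1-δ)^p := by
      calc ∑ n ∈ range N, P n ≤ ∑ n ∈ range N, (1-δ)^p :=
            Finset.sum_le_sum (fun n hn => hcon n hn)
        _ = N * (1-δ)^p := by rw [Finset.sum_const, Finset.card_range, nsmul_eq_mul]
    have h2 : (N:ℝ)⁻¹ * ∑ n ∈ range N, P n ≤ (1-δ)^p := by
      rw [inv_mul_le_iff₀ hNpos]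
      linarith
    linarith
  refine ⟨n, fun i => ?_⟩
  have hqi : 1 - δ < q i n := by
    have hP_le : P n ≤ (q i n)^p := by
      simp only [hPdef]
      rw [← Finset.mul_prod_erase univ _ (Finset.mem_univ i)]
      have hrest : ∏ j ∈ univ.erase i, (q j n)^p ≤ 1 :=
        Finset.prod_le_one (fun j _ => pow_nonneg (hq0 j n) p)
          (fun j _ => pow_le_one₀ (hq0 j n) (hq1 j n))
      exact mul_le_of_le_one_right (pow_nonneg (hq0 i n) p) hrest
    exact lt_of_pow_lt_pow_left₀ p (hq0 i n) (lt_of_lt_of_le hPgt hP_le)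
  set s : ℝ := (n:ℝ)*θ i - y i with hsdef
  set d : ℝ := s - round s with hddef
  have hd2 : |d| ≤ 1/2 := by rw [hddef]; exact abs_sub_round s
  clear_value s d
  have hcos : Real.cos (2*Real.pi*s) = Real.cos (2*Real.pi*d) := by
    have harg : 2*Real.pi*s = 2*Real.pi*d + (round s : ℤ) * (2*Real.pi) := by
      rw [hddef]; push_cast; ring
    rw [harg, Real.cos_add_int_mul_two_pi]
  have hcos2 : Real.cos (2*Real.pi*d) ≤ 1 - 8*d^2 := by
    have h1 : |2*Real.pi*d| ≤ Real.pi := by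
      rw [abs_mul, abs_of_pos (by positivity : (0:ℝ) < 2*Real.pi)]
      nlinarith [Real.pi_pos, abs_nonneg d]
    have h2 := Real.cos_le_one_sub_mul_cos_sq h1
    have heq : 2/Real.pi^2 * (2*Real.pi*d)^2 = 8*d^2 := by
      field_simp
      ring
    rw [heq] at h2
    exact h2
  have hq' : 1 - 2*δ < Real.cos (2*Real.pi*s) := by
    have : q i n = (1 + Real.cos (2*Real.pi*s))/2 := by simp only [hqdef, hsdef]
    rw [this] at hqi
    linarith
  have hd : |d| < ε₀/2 := by
    by_contra hcon
    push_neg at hcon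
    have h5 : d^2 ≥ ε₀^2/4 := by nlinarith [sq_abs d]
    have h6 : Real.cos (2*Real.pi*s) ≤ 1 - 2*δ := by
      rw [hcos]
      calc Real.cos (2*Real.pi*d) ≤ 1 - 8*d^2 := hcos2
        _ ≤ 1 - 2*δ := by rw [hδdef]; linarith [h5]
    linarith
  have hdl := (abs_lt.mp hd).1
  have hdu := (abs_lt.mp hd).2
  have hfract : Int.fract ((n:ℝ)*θ i) = y i + d := by
    have hval : (n:ℝ)*θ i = (y i + d) + (round s : ℤ) := by
      rw [hddef, hsdef]; push_cast; ring
    rw [hval, Int.fract_add_intCast]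
    refine Int.fract_eq_self.mpr ⟨?_, ?_⟩
    · have := hylb i; linarith
    · have := hyub i; linarith
  rw [hfract]
  have h3 := abs_le.mp (hyx i)
  rw [abs_lt]
  constructor <;> linarith
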